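/- For every n ≥ 2, the holomorphic function f(w) = (1−w₁)^{−n/2} (principal branch) belongs to H²(B_n), but its restriction to the hyperplane slice {w ∈ B_n : w_n = 0} ≅ B_{n−1}, namely w' ↦ (1−w'₁)^{−n/2}, does not belong to H²(B_{n−1}). Hence restriction to a hyperplane does not map H²(B_n) into H²(B_{n−1}). -/

import Mathlib

open MeasureTheory Metric

/-- Lebesgue measure on `ℂⁿ ≅ ℝ^{2n}`, realized through the real inner product structure of
`EuclideanSpace ℂ (Fin n)`. -/
noncomputable instance (n : ℕ) : MeasurableSpace (EuclideanSpace ℂ (Fin n)) :=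
  MeasurableSpace.comap WithLp.ofLp MeasurableSpace.pi

instance (n : ℕ) : BorelSpace (EuclideanSpace ℂ (Fin n)) := PiLp.borelSpace 2

section Helpers

open Set ENNReal

noncomputable def cLIE (N : ℕ) : EuclideanSpace ℂ (Fin N) ≃ₗᵢ[ℝ] EuclideanSpace ℝ (Fin N × Fin 2) :=
  (LinearIsometryEquiv.piLpCongrRight 2 fun _ : Fin N => Complex.orthonormalBasisOneI.repr).trans
    ((LinearIsometryEquiv.piLpCurry ℝ 2 fun _ : Fin N => fun _ : Fin 2 => ℝ).symm.trans
      (LinearIsometryEquiv.piLpCongrLeft 2 ℝ ℝ (Equiv.sigmaEquivProd (Fin N) (Fin 2))))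

noncomputable def cONB (N : ℕ) : OrthonormalBasis (Fin N × Fin 2) ℝ (EuclideanSpace ℂ (Fin N)) :=
  ⟨cLIE N⟩

lemma sqQ_vol : (volume : Measure ℂ) {z : ℂ | z.re ∈ Icc (0:ℝ) 1 ∧ z.im ∈ Icc (0:ℝ) 1} = 1 := by
  have h : {z : ℂ | z.re ∈ Icc (0:ℝ) 1 ∧ z.im ∈ Icc (0:ℝ) 1}
      = Complex.measurableEquivRealProd ⁻¹' (Icc (0:ℝ) 1 ×ˢ Icc (0:ℝ) 1) := by
    ext z; simp [Complex.measurableEquivRealProd, Set.mem_prod, Prod.le_def]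
    tauto
  rw [h, Complex.volume_preserving_equiv_real_prod.measure_preimage
    (measurableSet_Icc.prod measurableSet_Icc).nullMeasurableSet]
  rw [Measure.volume_eq_prod, Measure.prod_prod, Real.volume_Icc]
  simp

lemma volume_eq_pi (N : ℕ) :
    (volume : Measure (EuclideanSpace ℂ (Fin N)))
      = Measure.map (MeasurableEquiv.toLp 2 (Fin N → ℂ)) (Measure.pi (fun _ : Fin N => (volume : Measure ℂ))) := by
  haveI h0 : Measure.IsAddHaarMeasure (Measure.map (MeasurableEquiv.toLp 2 (Fin N → ℂ)) (Measure.pi (fun _ : Fin N => (volume : Measure ℂ)))) :=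
    (WithLp.linearEquiv 2 ℝ (Fin N → ℂ)).symm.toContinuousLinearEquiv.isAddHaarMeasure_map _
  haveI h1 : Measure.IsAddLeftInvariant
      (Measure.map (MeasurableEquiv.toLp 2 (Fin N → ℂ)) (Measure.pi (fun _ : Fin N => (volume : Measure ℂ)))) := by
    infer_instance
  haveI h2 : SigmaFinite
      (Measure.map (MeasurableEquiv.toLp 2 (Fin N → ℂ)) (Measure.pi (fun _ : Fin N => (volume : Measure ℂ)))) := by infer_instance
  rw [← (cONB N).addHaar_eq_volume, Module.Basis.addHaar_eq_iff]
  rw [Module.Basis.coe_parallelepiped, parallelepiped_basis_eq]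
  have h : {x : EuclideanSpace ℂ (Fin N) | ∀ i, (cONB N).toBasis.repr x i ∈ Icc (0:ℝ) 1}
      = WithLp.ofLp ⁻¹' Set.pi univ (fun _ : Fin N => {z : ℂ | z.re ∈ Icc (0:ℝ) 1 ∧ z.im ∈ Icc (0:ℝ) 1}) := by
    ext x
    simp only [mem_setOf_eq, mem_preimage, mem_pi]
    constructor
    · intro hx i _
      exact ⟨by simpa [cONB, OrthonormalBasis.coe_toBasis_repr_apply, cLIE, Sigma.uncurry] using hx (i, 0),
        by simpa [cONB, OrthonormalBasis.coe_toBasis_repr_apply, cLIE, Sigma.uncurry] using hx (i, 1)⟩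
    · rintro hx ⟨i, k⟩
      have h0 : (cONB N).toBasis.repr x (i, k) = Complex.orthonormalBasisOneI.repr (x i) k := by
        simp [cONB, OrthonormalBasis.coe_toBasis_repr_apply, cLIE, Sigma.uncurry]
      rw [h0, Complex.orthonormalBasisOneI_repr_apply]
      fin_cases k
      · exact (hx i (mem_univ i)).1
      · exact (hx i (mem_univ i)).2
  rw [h, MeasurableEquiv.map_apply]
  have hpp := Measure.pi_pi (fun _ : Fin N => (volume : Measure ℂ))
    (fun _ => {z : ℂ | z.re ∈ Icc (0:ℝ) 1 ∧ z.im ∈ Icc (0:ℝ) 1})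
  exact hpp.trans (by rw [Finset.prod_const, sqQ_vol, one_pow])

lemma coord_sq_le {N : ℕ} (w : EuclideanSpace ℂ (Fin N)) (s : Finset (Fin N)) :
    ∑ i ∈ s, ‖w i‖ ^ 2 ≤ ‖w‖ ^ 2 := by
  rw [EuclideanSpace.norm_eq, Real.sq_sqrt (by positivity)]
  exact Finset.sum_le_sum_of_subset_of_nonneg (Finset.subset_univ s)
    (fun i _ _ => by positivity)

lemma coord_le {N : ℕ} (w : EuclideanSpace ℂ (Fin N)) (i : Fin N) : ‖w i‖ ≤ ‖w‖ := by
  have h := coord_sq_le w {i}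
  rw [Finset.sum_singleton] at h
  nlinarith [norm_nonneg (w i), norm_nonneg w]

lemma pt_norm (n : ℕ) (z : ℂ) (hz : ‖z‖ < 1) :
    ‖((1 : ℂ) - z) ^ (-(n : ℂ) / 2)‖ ^ 2 = ((‖(1 - z)‖) ^ n)⁻¹ := by
  have h1 : (0:ℝ) < 1 - ‖z‖ := by linarith
  have hne : (1 : ℂ) - z ≠ 0 := by
    intro h
    have : ‖z‖ = 1 := by
      have : z = 1 := by linear_combination -h
      simp [this]
    linarith
  have habs : 0 < ‖(1 - z)‖ := by
    simpa [norm_pos_iff] using hne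
  have hre : ((-(n : ℂ)) / 2).re = -(n : ℝ) / 2 := by simp
  have him : ((-(n : ℂ)) / 2).im = 0 := by simp
  rw [Complex.norm_cpow_of_ne_zero hne, hre, him]
  rw [mul_zero, Real.exp_zero, div_one]
  rw [← Real.rpow_natCast (‖(1 - z)‖ ^ (-(n:ℝ)/2)) 2, ← Real.rpow_mul habs.le]
  norm_num

lemma pt_slit (z : ℂ) (hz : ‖z‖ < 1) : ((1 : ℂ) - z) ∈ Complex.slitPlane := by
  left
  have : z.re ≤ ‖z‖ := Complex.re_le_norm z
  simp only [Complex.sub_re, Complex.one_re]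
  linarith

lemma diff_part (N n : ℕ) (i0 : Fin N) :
    DifferentiableOn ℂ (fun w : EuclideanSpace ℂ (Fin N) => ((1:ℂ) - w i0) ^ (-(n:ℂ)/2))
      (ball (0 : EuclideanSpace ℂ (Fin N)) 1) := by
  intro w hw
  apply DifferentiableAt.differentiableWithinAt
  have hz : ‖(w i0)‖ < 1 := by
    have := coord_le w i0
    have hw' : ‖w‖ < 1 := by simpa [mem_ball, dist_eq_norm] using hw
    calc ‖(w i0)‖ = ‖w i0‖ := rfl
    _ ≤ ‖w‖ := coord_le w i0
    _ < 1 := hw'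
  have hcoord : DifferentiableAt ℂ (fun w : EuclideanSpace ℂ (Fin N) => (1:ℂ) - w i0) w :=
    (differentiableAt_const _).sub (EuclideanSpace.proj (𝕜 := ℂ) i0).differentiableAt
  exact hcoord.cpow (differentiableAt_const _) (pt_slit _ hz)

lemma dyadic_pick {d : ℝ} (hd0 : 0 < d) (hd2 : d < 2) :
    ∃ j : ℕ, (2⁻¹:ℝ)^j ≤ d ∧ d ≤ 2 * (2⁻¹:ℝ)^j := by
  classical
  have hex : ∃ j : ℕ, (2⁻¹:ℝ)^j ≤ d := by
    obtain ⟨j, hj⟩ := exists_pow_lt_of_lt_one hd0 (by norm_num : (2⁻¹:ℝ) < 1)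
    exact ⟨j, hj.le⟩
  obtain ⟨j0, h1, h2⟩ : ∃ j, ((2⁻¹:ℝ)^j ≤ d ∧ ∀ m < j, d < (2⁻¹:ℝ)^m) :=
    ⟨Nat.find hex, Nat.find_spec hex, fun m hm => lt_of_not_ge (Nat.find_min hex hm)⟩
  refine ⟨j0, h1, ?_⟩
  rcases j0 with _ | k
  · calc d ≤ 2 := hd2.le
    _ = 2 * (2⁻¹:ℝ)^0 := by norm_num
  · have := h2 k (by omega)
    have heq : (2⁻¹:ℝ)^k = 2 * (2⁻¹:ℝ)^(k+1) := by ring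
    linarith

lemma prod_ite_fin {n : ℕ} (i0 : Fin n) (X Y : ℝ≥0∞) :
    (∏ i : Fin n, if i = i0 then X else Y) = X * Y^(n-1) := by
  classical
  rw [Finset.prod_eq_mul_prod_sdiff_singleton_of_mem (Finset.mem_univ i0)
    (fun i => if i = i0 then X else Y), if_pos rfl]
  congr 1
  rw [Finset.prod_congr rfl (fun i hi => if_neg (by
    simp only [Finset.mem_sdiff, Finset.mem_singleton] at hi; exact hi.2)),
    Finset.prod_const]
  congr 1
  rw [Finset.card_sdiff_of_subset (Finset.singleton_subset_iff.2 (Finset.mem_univ i0))]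
  simp

lemma upper_calc (n : ℕ) (hn : 1 ≤ n) (u p : ℝ≥0∞) (hu : u ≠ 0) (hut : u ≠ ⊤) :
    (u^n)⁻¹ * ((2*u)^2 * p * ((4*u) * p)^(n-1)) = (4*p)^n * u := by
  obtain ⟨k, rfl⟩ : ∃ k, n = k + 1 := ⟨n-1, by omega⟩
  have h1 : (2*u)^2 * p * ((4*u) * p)^(k+1-1) = u^(k+1) * ((4*p)^(k+1) * u) := by
    simp only [Nat.add_sub_cancel]
    ring
  rw [h1, ← mul_assoc, ENNReal.inv_mul_cancel (pow_ne_zero _ hu) (pow_ne_top hut), one_mul]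

lemma int_part (n : ℕ) (hn : 1 ≤ n) (i0 : Fin n) :
    IntegrableOn (fun w : EuclideanSpace ℂ (Fin n) => ‖((1:ℂ) - w i0) ^ (-(n:ℂ)/2)‖ ^ 2)
      (ball (0 : EuclideanSpace ℂ (Fin n)) 1) volume := by
  have habs : ∀ w ∈ ball (0 : EuclideanSpace ℂ (Fin n)) 1, ‖(w i0)‖ < 1 := by
    intro w hw
    calc ‖(w i0)‖ = ‖w i0‖ := rfl
    _ ≤ ‖w‖ := coord_le w i0
    _ < 1 := by simpa [mem_ball, dist_eq_norm] using hw
  constructor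
  · exact (((diff_part n n i0).continuousOn.norm.pow 2).aestronglyMeasurable measurableSet_ball)
  · rw [hasFiniteIntegral_iff_ofReal (ae_of_all _ fun w => by positivity)]
    set t : ℕ → ℝ := fun j => (2⁻¹:ℝ)^j with ht
    have ht0 : ∀ j, 0 < t j := fun j => by positivity
    set A : ℕ → Set (EuclideanSpace ℂ (Fin n)) := fun j =>
      {w | w ∈ ball (0 : EuclideanSpace ℂ (Fin n)) 1 ∧
        t j ≤ ‖(1 - w i0)‖ ∧ ‖(1 - w i0)‖ ≤ 2 * t j} with hA
    have hcover : ball (0 : EuclideanSpace ℂ (Fin n)) 1 ⊆ ⋃ j, A j := by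
      intro w hw
      have hlt : ‖(w i0)‖ < 1 := habs w hw
      have h0 : 0 < ‖(1 - w i0)‖ := by
        have hne : (1:ℂ) - w i0 ≠ 0 := by
          intro h
          rw [sub_eq_zero] at h
          rw [← h] at hlt
          simp at hlt
        simpa [norm_pos_iff] using hne
      have h2 : ‖(1 - w i0)‖ < 2 := by
        have hs : ‖(1 - w i0)‖ ≤ 1 + ‖(w i0)‖ := by
          simpa using norm_sub_le (1:ℂ) (w i0)
        linarith
      obtain ⟨j, hj1, hj2⟩ := dyadic_pick h0 h2
      exact mem_iUnion.2 ⟨j, hw, hj1, hj2⟩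
    have hAmeas : ∀ j, MeasurableSet (A j) := by
      intro j
      have hc : Continuous fun w : EuclideanSpace ℂ (Fin n) => ‖(1 - w i0)‖ :=
        continuous_norm.comp (continuous_const.sub (EuclideanSpace.proj (𝕜 := ℂ) i0).continuous)
      have : A j = ball (0 : EuclideanSpace ℂ (Fin n)) 1 ∩
          (fun w : EuclideanSpace ℂ (Fin n) => ‖(1 - w i0)‖) ⁻¹' (Icc (t j) (2 * t j)) := by
        ext w; simp [hA, mem_Icc, and_assoc]
      rw [this]
      exact measurableSet_ball.inter (hc.measurable measurableSet_Icc)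
    -- inclusion in product set
    have hincl : ∀ j, A j ⊆ WithLp.ofLp ⁻¹' Set.pi univ (fun i : Fin n =>
        if i = i0 then closedBall (1:ℂ) (2 * t j) else closedBall (0:ℂ) (2 * Real.sqrt (t j))) := by
      intro j w hw
      obtain ⟨hwb, hj1, hj2⟩ := hw
      intro i _
      dsimp only
      by_cases hi : i = i0
      · rw [if_pos hi, mem_closedBall, hi, dist_eq_norm]
        calc ‖w i0 - 1‖ = ‖(1 - w i0)‖ := by
              rw [norm_sub_rev]
        _ ≤ 2 * t j := hj2
      · simp only [if_neg hi, mem_closedBall, dist_zero_right]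
        have hsum := coord_sq_le w {i, i0}
        rw [Finset.sum_pair hi] at hsum
        have hwn : ‖w‖ < 1 := by simpa [mem_ball, dist_eq_norm] using hwb
        have h1 : ‖w i‖^2 ≤ 1 - ‖w i0‖^2 := by nlinarith [norm_nonneg w]
        have h2 : 1 - ‖w i0‖ ≤ ‖(1 - w i0)‖ := by
          have := norm_sub_norm_le (1:ℂ) (w i0)
          simpa using this
        have h3 : ‖w i0‖ ≤ 1 := ((habs w hwb)).le
        have h4 : ‖w i‖^2 ≤ 4 * t j := by nlinarith
        calc ‖w i‖ = Real.sqrt (‖w i‖^2) := (Real.sqrt_sq (norm_nonneg _)).symm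
        _ ≤ Real.sqrt (4 * t j) := Real.sqrt_le_sqrt h4
        _ = 2 * Real.sqrt (t j) := by
            rw [show (4:ℝ) * t j = (2*Real.sqrt (t j))^2 by
              rw [mul_pow, Real.sq_sqrt (ht0 j).le]; ring]
            exact Real.sqrt_sq (by positivity)
    -- measure bound
    have hmub : ∀ j, volume (A j) ≤
        (2 * ENNReal.ofReal (t j))^2 * NNReal.pi *
          ((4 * ENNReal.ofReal (t j)) * NNReal.pi)^(n-1) := by
      intro j
      refine le_trans (measure_mono (hincl j)) ?_
      rw [volume_eq_pi n, MeasurableEquiv.map_apply]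
      have hpp := Measure.pi_pi (fun _ : Fin n => (volume : Measure ℂ))
        (fun i : Fin n => if i = i0 then closedBall (1:ℂ) (2 * t j)
          else closedBall (0:ℂ) (2 * Real.sqrt (t j)))
      refine le_trans (le_of_eq hpp) ?_
      have heach : ∀ i : Fin n, (volume : Measure ℂ)
            (if i = i0 then closedBall (1:ℂ) (2 * t j) else closedBall (0:ℂ) (2 * Real.sqrt (t j)))
          = if i = i0 then (2 * ENNReal.ofReal (t j))^2 * NNReal.pi
            else (4 * ENNReal.ofReal (t j)) * NNReal.pi := by
        intro i
        by_cases hi : i = i0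
        · rw [if_pos hi, if_pos hi, Complex.volume_closedBall]
          congr 1
          rw [ENNReal.ofReal_mul (by norm_num), ENNReal.ofReal_ofNat]
        · rw [if_neg hi, if_neg hi, Complex.volume_closedBall]
          congr 1
          rw [ENNReal.ofReal_mul (by norm_num), ENNReal.ofReal_ofNat]
          rw [mul_pow, ← ENNReal.ofReal_pow (Real.sqrt_nonneg _),
            Real.sq_sqrt (ht0 j).le]
          rw [show ((2:ℝ≥0∞)^2 : ℝ≥0∞) = 4 by norm_num]
      rw [Finset.prod_congr rfl (fun i _ => heach i), prod_ite_fin]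
    -- per-j integral bound
    have hjint : ∀ j, (∫⁻ w in A j, ENNReal.ofReal (‖((1:ℂ) - w i0) ^ (-(n:ℂ)/2)‖ ^ 2)) ≤
        (4 * (NNReal.pi : ℝ≥0∞))^n * (2⁻¹:ℝ≥0∞)^j := by
      intro j
      have hptwise : ∀ w ∈ A j, ENNReal.ofReal (‖((1:ℂ) - w i0) ^ (-(n:ℂ)/2)‖ ^ 2)
          ≤ ((ENNReal.ofReal (t j))^n)⁻¹ := by
        intro w hw
        obtain ⟨hwb, hj1, _⟩ := hw
        rw [pt_norm n _ (habs w hwb)]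
        have h1 : ((‖(1 - w i0)‖)^n)⁻¹ ≤ ((t j)^n)⁻¹ := by
          apply inv_anti₀ (by positivity)
          exact pow_le_pow_left₀ (ht0 j).le hj1 n
        refine le_trans (ENNReal.ofReal_le_ofReal h1) ?_
        rw [ENNReal.ofReal_inv_of_pos (by positivity), ENNReal.ofReal_pow (ht0 j).le]
      calc (∫⁻ w in A j, ENNReal.ofReal (‖((1:ℂ) - w i0) ^ (-(n:ℂ)/2)‖ ^ 2))
          ≤ ∫⁻ _ in A j, ((ENNReal.ofReal (t j))^n)⁻¹ := setLIntegral_mono' (hAmeas j) hptwise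
        _ = ((ENNReal.ofReal (t j))^n)⁻¹ * volume (A j) := setLIntegral_const _ _
        _ ≤ ((ENNReal.ofReal (t j))^n)⁻¹ *
            ((2 * ENNReal.ofReal (t j))^2 * NNReal.pi *
              ((4 * ENNReal.ofReal (t j)) * NNReal.pi)^(n-1)) := by
            exact mul_le_mul_right (hmub j) _
        _ = (4 * (NNReal.pi : ℝ≥0∞))^n * ENNReal.ofReal (t j) := by
            exact upper_calc n hn _ _ (by simp [ht0 j]) ENNReal.ofReal_ne_top
        _ = (4 * (NNReal.pi : ℝ≥0∞))^n * (2⁻¹:ℝ≥0∞)^j := by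
            congr 1
            rw [ht, ENNReal.ofReal_pow (by norm_num)]
            congr 1
            rw [ENNReal.ofReal_inv_of_pos (by norm_num)]
            norm_num
    calc (∫⁻ w in ball (0 : EuclideanSpace ℂ (Fin n)) 1,
            ENNReal.ofReal (‖((1:ℂ) - w i0) ^ (-(n:ℂ)/2)‖ ^ 2))
        ≤ ∫⁻ w in ⋃ j, A j, ENNReal.ofReal (‖((1:ℂ) - w i0) ^ (-(n:ℂ)/2)‖ ^ 2) :=
          lintegral_mono_set hcover
      _ ≤ ∑' j, ∫⁻ w in A j, ENNReal.ofReal (‖((1:ℂ) - w i0) ^ (-(n:ℂ)/2)‖ ^ 2) :=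
          lintegral_iUnion_le _ _
      _ ≤ ∑' j, (4 * (NNReal.pi : ℝ≥0∞))^n * (2⁻¹:ℝ≥0∞)^j := ENNReal.tsum_le_tsum hjint
      _ = (4 * (NNReal.pi : ℝ≥0∞))^n * ∑' j, (2⁻¹:ℝ≥0∞)^j := ENNReal.tsum_mul_left
      _ < ⊤ := by
          rw [ENNReal.tsum_geometric, ENNReal.one_sub_inv_two]
          refine ENNReal.mul_lt_top ?_ ?_
          · exact (pow_lt_top (ENNReal.mul_lt_top (by norm_num) coe_lt_top))
          · simp

lemma lower_calc (N : ℕ) (hN : 1 ≤ N) (u a c p : ℝ≥0∞) (hu0 : u ≠ 0) (hut : u ≠ ⊤) :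
    ((2*u)^(N+1))⁻¹ * ((u*a)^2 * p * ((u*c) * p)^(N-1))
      = ((2:ℝ≥0∞)^(N+1))⁻¹ * (a^2 * p * (c*p)^(N-1)) := by
  obtain ⟨k, rfl⟩ : ∃ k, N = k + 1 := ⟨N-1, by omega⟩
  simp only [Nat.add_sub_cancel]
  have h2 : ((2*u)^(k+1+1))⁻¹ = ((2:ℝ≥0∞)^(k+1+1))⁻¹ * (u^(k+1+1))⁻¹ := by
    rw [mul_pow, ENNReal.mul_inv (Or.inl (pow_ne_zero _ (by norm_num)))
      (Or.inl (pow_ne_top (by norm_num)))]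
  have h3 : (u*a)^2 * p * ((u*c) * p)^k = u^(k+1+1) * (a^2 * p * (c*p)^k) := by ring
  rw [h2, h3, mul_assoc, ← mul_assoc (u^(k+1+1))⁻¹,
    ENNReal.inv_mul_cancel (pow_ne_zero _ hu0) (pow_ne_top hut), one_mul]

lemma nonint_part (N e : ℕ) (hN : 1 ≤ N) (he : e = N + 1) (i0 : Fin N) :
    ¬ IntegrableOn
        (fun w : EuclideanSpace ℂ (Fin N) => ‖((1:ℂ) - w i0) ^ (-(e:ℂ)/2)‖ ^ 2)
        (ball (0 : EuclideanSpace ℂ (Fin N)) 1) volume := by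
  intro h
  have hfin := h.2
  rw [hasFiniteIntegral_iff_ofReal (ae_of_all _ fun w => by positivity)] at hfin
  set t : ℕ → ℝ := fun k => (2⁻¹:ℝ)^(k+1) with htdef
  have ht0 : ∀ k, 0 < t k := fun k => by positivity
  have ht12 : ∀ k, t k ≤ 1/2 := by
    intro k
    calc t k ≤ (2⁻¹:ℝ)^(0+1) :=
          pow_le_pow_of_le_one (by norm_num) (by norm_num) (by omega)
    _ = 1/2 := by norm_num
  set r : ℕ → ℝ := fun k => Real.sqrt (t k / (2*N)) with hrdef
  set S : ℕ → Set (EuclideanSpace ℂ (Fin N)) := fun k =>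
    WithLp.ofLp ⁻¹' Set.pi univ (fun i : Fin N =>
      if i = i0 then ball ((1:ℂ) - (t k : ℂ)) (t k / 4) else ball (0:ℂ) (r k)) with hSdef
  have hmem : ∀ k w, w ∈ S k →
      (‖(w i0 - (1 - (t k : ℂ)))‖ < t k / 4 ∧
        ∀ i, i ≠ i0 → ‖w i‖ < r k) := by
    intro k w hw
    constructor
    · have h := hw i0 (mem_univ i0)
      simp only [hSdef, if_pos rfl, ↓reduceIte, mem_ball, Complex.dist_eq] at h
      exact h
    · intro i hi
      have := hw i (mem_univ i)
      simp only [hSdef, if_neg hi, mem_ball, dist_zero_right] at this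
      exact this
  have hre : ∀ k w, w ∈ S k →
      1 - 5 * t k / 4 < (w i0).re ∧ (w i0).re < 1 - 3 * t k / 4 := by
    intro k w hw
    have h1 := (hmem k w hw).1
    have h2 : |(w i0).re - (1 - t k)| < t k / 4 := by
      have hle := Complex.abs_re_le_norm (w i0 - (1 - (t k : ℂ)))
      have hre' : (w i0 - (1 - (t k : ℂ))).re = (w i0).re - (1 - t k) := by simp
      rw [hre'] at hle
      exact lt_of_le_of_lt hle h1
    rw [abs_lt] at h2
    constructor <;> [linarith [h2.1]; linarith [h2.2]]
  have habs0 : ∀ k w, w ∈ S k → ‖w i0‖ < 1 - 3 * t k / 4 := by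
    intro k w hw
    have h1 := (hmem k w hw).1
    have h3 : ‖w i0‖ ≤ ‖w i0 - (1 - (t k:ℂ))‖ + ‖(1:ℂ) - (t k:ℂ)‖ := by
      simpa using norm_add_le (w i0 - (1 - (t k:ℂ))) (1 - (t k:ℂ))
    have h4 : ‖(1:ℂ) - (t k:ℂ)‖ = 1 - t k := by
      rw [show (1:ℂ) - (t k:ℂ) = ((1 - t k : ℝ) : ℂ) by push_cast; ring]
      rw [Complex.norm_real, Real.norm_eq_abs, abs_of_nonneg (by linarith [ht12 k])]
    have h5 : ‖w i0 - (1 - (t k:ℂ))‖ < t k / 4 := h1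
    rw [h4] at h3
    linarith
  have hsub : ∀ k, S k ⊆ ball (0 : EuclideanSpace ℂ (Fin N)) 1 := by
    intro k w hw
    rw [mem_ball_zero_iff]
    have hsum : ∑ i : Fin N, ‖w i‖^2 < 1 := by
      rw [Finset.sum_eq_add_sum_sdiff_singleton_of_mem (Finset.mem_univ i0) (fun i => ‖w i‖^2)]
      have hrest : ∑ i ∈ Finset.univ \ {i0}, ‖w i‖^2 ≤
          ((Finset.univ \ {i0} : Finset (Fin N)).card : ℝ) * (t k / (2*N)) := by
        rw [← nsmul_eq_mul]
        apply Finset.sum_le_card_nsmul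
        intro i hi
        have hi' : i ≠ i0 := by
          simp only [Finset.mem_sdiff, Finset.mem_singleton] at hi; exact hi.2
        have := (hmem k w hw).2 i hi'
        calc ‖w i‖^2 ≤ (r k)^2 := by
              apply pow_le_pow_left₀ (norm_nonneg _) this.le
        _ = t k / (2*N) := Real.sq_sqrt (by positivity)
      have hcard : ((Finset.univ \ {i0} : Finset (Fin N)).card : ℝ) = (N:ℝ) - 1 := by
        rw [Finset.card_sdiff_of_subset (Finset.singleton_subset_iff.2 (Finset.mem_univ i0))]
        simp only [Finset.card_univ, Fintype.card_fin, Finset.card_singleton]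
        rw [Nat.cast_sub (by omega)]
        norm_num
      rw [hcard] at hrest
      have hNR : (1:ℝ) ≤ N := by exact_mod_cast hN
      have hkey : ((N:ℝ) - 1) * (t k / (2*N)) ≤ t k / 2 := by
        have h1 : ((N:ℝ) - 1) * (t k / (2*N)) ≤ (N:ℝ) * (t k / (2*N)) :=
          mul_le_mul_of_nonneg_right (by linarith) (by positivity)
        have h2 : (N:ℝ) * (t k / (2*N)) = t k / 2 := by
          field_simp
        linarith
      have ha := habs0 k w hw
      have ha0 : (0:ℝ) ≤ ‖w i0‖ := norm_nonneg _
      have hasq : ‖w i0‖^2 < (1 - 3 * t k / 4)^2 := by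
        apply pow_lt_pow_left₀ ha ha0
        norm_num
      nlinarith [ht0 k, ht12 k]
    calc ‖w‖ = Real.sqrt (∑ i : Fin N, ‖w i‖^2) := EuclideanSpace.norm_eq w
    _ < 1 := by
        rw [show (1:ℝ) = Real.sqrt 1 by simp]
        exact Real.sqrt_lt_sqrt (by positivity) (by simpa using hsum)
  have hdisj : Pairwise (Function.onFun Disjoint S) := by
    have key : ∀ k k', k < k' → ∀ w, w ∈ S k → w ∉ S k' := by
      intro k k' hkk w hw hw'
      have h1 := (hre k w hw).2
      have h2 := (hre k' w hw').1
      have htk : t k' ≤ t k / 2 := by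
        calc t k' ≤ (2⁻¹:ℝ)^(k+2) :=
              pow_le_pow_of_le_one (by norm_num) (by norm_num) (by omega)
        _ = t k / 2 := by
            simp only [htdef]
            rw [pow_succ]
            ring
      have := ht0 k
      linarith
    intro k k' hkk
    rcases lt_or_gt_of_ne hkk with h | h
    · exact Set.disjoint_left.2 (fun w hw hw' => key k k' h w hw hw')
    · exact Set.disjoint_right.2 (fun w hw hw' => key k' k h w hw hw')
  have hSmeas : ∀ k, MeasurableSet (S k) := by
    intro k
    refine WithLp.measurable_ofLp _ _ (MeasurableSet.univ_pi ?_)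
    intro i
    by_cases hi : i = i0 <;> simp [hi, measurableSet_ball]
  -- lower bound on each piece
  set u : ℕ → ℝ≥0∞ := fun k => ENNReal.ofReal (t k) with hudef
  have hu0 : ∀ k, u k ≠ 0 := fun k => by simp [hudef, ENNReal.ofReal_eq_zero, not_le, ht0 k]
  have hut : ∀ k, u k ≠ ⊤ := fun k => ENNReal.ofReal_ne_top
  set a : ℝ≥0∞ := ENNReal.ofReal (4⁻¹:ℝ) with hadef
  set c : ℝ≥0∞ := ENNReal.ofReal ((2*(N:ℝ))⁻¹) with hcdef
  set K : ℝ≥0∞ := ((2:ℝ≥0∞)^(N+1))⁻¹ * (a^2 * NNReal.pi * (c*NNReal.pi)^(N-1)) with hKdef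
  have hK0 : K ≠ 0 := by
    have hNR : (0:ℝ) < N := by exact_mod_cast hN
    have hπ : (NNReal.pi : ℝ≥0∞) ≠ 0 := by
      simp [ENNReal.coe_ne_zero, NNReal.pi_ne_zero]
    apply mul_ne_zero
    · rw [ENNReal.inv_ne_zero]
      exact pow_ne_top (by norm_num)
    · apply mul_ne_zero (mul_ne_zero (pow_ne_zero _ (by simp [hadef])) hπ)
      apply pow_ne_zero
      apply mul_ne_zero _ hπ
      simp only [hcdef, ne_eq, ENNReal.ofReal_eq_zero, not_le]
      positivity
  have hlow : ∀ k, K ≤ ∫⁻ w in S k,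
      ENNReal.ofReal (‖((1:ℂ) - w i0) ^ (-(e:ℂ)/2)‖ ^ 2) := by
    intro k
    have hpt : ∀ w ∈ S k, ((2 * u k)^e)⁻¹ ≤
        ENNReal.ofReal (‖((1:ℂ) - w i0) ^ (-(e:ℂ)/2)‖ ^ 2) := by
      intro w hw
      have hwb : ‖(w i0)‖ < 1 :=
        lt_of_lt_of_le (habs0 k w hw) (by linarith [ht0 k])
      rw [pt_norm e _ hwb]
      have h1 := (hmem k w hw).1
      have habs2 : ‖(1 - w i0)‖ ≤ 2 * t k := by
        have heq : (1:ℂ) - w i0 = -(w i0 - (1 - (t k:ℂ))) + (t k : ℂ) := by ring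
        have hb := norm_add_le (-(w i0 - (1 - (t k:ℂ)))) ((t k : ℂ))
        rw [← heq] at hb
        rw [norm_neg, Complex.norm_real, Real.norm_eq_abs, abs_of_nonneg (ht0 k).le] at hb
        linarith [ht0 k]
      have hpos : 0 < ‖(1 - w i0)‖ := by
        have := norm_sub_norm_le (1:ℂ) (w i0)
        have h2 := habs0 k w hw
        simp only [norm_one] at this
        calc (0:ℝ) < 3 * t k / 4 := by linarith [ht0 k]
        _ ≤ ‖(1 - w i0)‖ := by
            have : (1:ℝ) - ‖w i0‖ ≤ ‖(1:ℂ) - w i0‖ := by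
              simpa using norm_sub_norm_le (1:ℂ) (w i0)
            calc (3:ℝ) * t k / 4 ≤ 1 - ‖w i0‖ := by linarith
            _ ≤ ‖(1:ℂ) - w i0‖ := this
      have hmono : ((2*t k)^e)⁻¹ ≤ ((‖(1 - w i0)‖)^e)⁻¹ :=
        inv_anti₀ (pow_pos hpos e) (pow_le_pow_left₀ hpos.le habs2 e)
      have hcast : ((2*u k)^e)⁻¹ = ENNReal.ofReal (((2*t k)^e)⁻¹) := by
        rw [ENNReal.ofReal_inv_of_pos (by positivity),
          ENNReal.ofReal_pow (by positivity),
          ENNReal.ofReal_mul (by norm_num), ENNReal.ofReal_ofNat]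
      rw [hcast]
      exact ENNReal.ofReal_le_ofReal hmono
    have hμ : volume (S k) = (u k * a)^2 * NNReal.pi * ((u k * c) * NNReal.pi)^(N-1) := by
      rw [volume_eq_pi N, MeasurableEquiv.map_apply]
      simp only [hSdef]
      have hpp := Measure.pi_pi (fun _ : Fin N => (volume : Measure ℂ))
        (fun i : Fin N => if i = i0 then ball ((1:ℂ) - (t k:ℂ)) (t k/4) else ball (0:ℂ) (r k))
      refine hpp.trans ?_
      have heach : ∀ i : Fin N, (volume : Measure ℂ)
            (if i = i0 then ball ((1:ℂ) - (t k:ℂ)) (t k/4) else ball (0:ℂ) (r k))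
          = if i = i0 then (u k * a)^2 * (NNReal.pi : ℝ≥0∞)
            else ((u k * c) * NNReal.pi) := by
        intro i
        by_cases hi : i = i0
        · rw [if_pos hi, if_pos hi, Complex.volume_ball]
          congr 2
          rw [show t k / 4 = t k * (4⁻¹:ℝ) by ring,
            ENNReal.ofReal_mul (ht0 k).le]
        · rw [if_neg hi, if_neg hi, Complex.volume_ball]
          congr 1
          rw [← ENNReal.ofReal_pow (Real.sqrt_nonneg _), Real.sq_sqrt (by positivity),
            show t k / (2*(N:ℝ)) = t k * (2*(N:ℝ))⁻¹ by ring,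
            ENNReal.ofReal_mul (ht0 k).le]
      rw [Finset.prod_congr rfl (fun i _ => heach i), prod_ite_fin]
    calc K = ((2 * u k)^(N+1))⁻¹ *
          ((u k * a)^2 * NNReal.pi * ((u k * c) * NNReal.pi)^(N-1)) :=
        (lower_calc N hN (u k) a c NNReal.pi (hu0 k) (hut k)).symm
    _ = ((2 * u k)^e)⁻¹ * volume (S k) := by rw [hμ, he]
    _ = ∫⁻ _ in S k, ((2 * u k)^e)⁻¹ := (setLIntegral_const _ _).symm
    _ ≤ ∫⁻ w in S k, ENNReal.ofReal (‖((1:ℂ) - w i0) ^ (-(e:ℂ)/2)‖ ^ 2) :=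
        setLIntegral_mono' (hSmeas k) hpt
  have hchain : ∑' (_ : ℕ), K ≤
      ∫⁻ w in ball (0 : EuclideanSpace ℂ (Fin N)) 1,
        ENNReal.ofReal (‖((1:ℂ) - w i0) ^ (-(e:ℂ)/2)‖ ^ 2) := by
    calc ∑' (_ : ℕ), K
        ≤ ∑' k, ∫⁻ w in S k, ENNReal.ofReal (‖((1:ℂ) - w i0) ^ (-(e:ℂ)/2)‖ ^ 2) :=
          ENNReal.tsum_le_tsum hlow
      _ = ∫⁻ w in ⋃ k, S k, ENNReal.ofReal (‖((1:ℂ) - w i0) ^ (-(e:ℂ)/2)‖ ^ 2) :=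
          (lintegral_iUnion hSmeas hdisj _).symm
      _ ≤ _ := lintegral_mono_set (iUnion_subset hsub)
  rw [tsum_const_eq_top_of_ne_zero hK0] at hchain
  exact absurd (top_le_iff.1 hchain) hfin.ne

end Helpers

/-- For every `n ≥ 2`, the holomorphic function `f(w) = (1 - w₁)^{-n/2}`
(principal branch) belongs to `H²(B_n)`, but its restriction to the hyperplane slice
`{w_n = 0} ≅ B_{n-1}`, namely `w' ↦ (1 - w'₁)^{-n/2}`, does not belong to `H²(B_{n-1})`.
Hence restriction to a hyperplane does not map `H²(B_n)` into `H²(B_{n-1})`. -/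
theorem restriction_not_into_H2 (n : ℕ) (hn : 2 ≤ n) :
    (DifferentiableOn ℂ
        (fun w : EuclideanSpace ℂ (Fin n) =>
          ((1 : ℂ) - w ⟨0, by omega⟩) ^ (-(n : ℂ) / 2))
        (ball (0 : EuclideanSpace ℂ (Fin n)) 1) ∧
      IntegrableOn
        (fun w : EuclideanSpace ℂ (Fin n) =>
          ‖((1 : ℂ) - w ⟨0, by omega⟩) ^ (-(n : ℂ) / 2)‖ ^ 2)
        (ball (0 : EuclideanSpace ℂ (Fin n)) 1) volume) ∧
    ¬ IntegrableOn
        (fun w : EuclideanSpace ℂ (Fin (n - 1)) =>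
          ‖((1 : ℂ) - w ⟨0, by omega⟩) ^ (-(n : ℂ) / 2)‖ ^ 2)
        (ball (0 : EuclideanSpace ℂ (Fin (n - 1))) 1) volume := by
  exact ⟨⟨diff_part n n ⟨0, by omega⟩, int_part n (by omega) ⟨0, by omega⟩⟩,
    nonint_part (n - 1) n (by omega) (by omega) ⟨0, by omega⟩⟩
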